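/- Let c be a point of the plane and let C be a septa-hexagon centered at c: C is the union of seven regular hexagons of side length 1/2, all with orientation 0 (vertices at angles kπ/3 from their centers), one centered at c and the other six centered at the points c + (√3/2)·(cos(π/6 + jπ/3), sin(π/6 + jπ/3)) for j = 0,…,5. Then for every finite set S of points in the plane there exists a subset S' ⊆ S ∩ C with |S'| ≤ 7 such that every point p ∈ S ∩ C satisfies dist(p, q) ≤ 1 for some q ∈ S'. -/
import Mathlib


/-- The Euclidean plane. -/
abbrev Plane : Type := EuclideanSpace ℝ (Fin 2)

/-- A point of the plane with given coordinates. -/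
noncomputable def pt (x y : ℝ) : Plane := (EuclideanSpace.equiv (Fin 2) ℝ).symm ![x, y]

/-- The `k`-th vertex of the regular hexagon of side length `1/2` with center `c`
and orientation `φ`. -/
noncomputable def hexVertex (c : Plane) (φ : ℝ) (k : Fin 6) : Plane :=
  c + (1 / 2 : ℝ) • pt (Real.cos (φ + k * Real.pi / 3)) (Real.sin (φ + k * Real.pi / 3))

/-- The regular hexagon of side length `1/2` with center `c` and orientation `φ`:
the convex hull of its six vertices. -/
noncomputable def hexagon (c : Plane) (φ : ℝ) : Set Plane :=
  convexHull ℝ (Set.range (hexVertex c φ))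

/-- The septa-hexagon centered at `c`: the union of the regular hexagon of side length `1/2`
centered at `c` (orientation `0`) and its six edge-adjacent congruent hexagons, whose centers
are at distance `√3/2` from `c` at angles `π/6 + jπ/3`, `j = 0, …, 5`. -/
noncomputable def septaHexagon (c : Plane) : Set Plane :=
  hexagon c 0 ∪
    ⋃ j : Fin 6,
      hexagon
        (c + (Real.sqrt 3 / 2) •
          pt (Real.cos (Real.pi / 6 + j * Real.pi / 3))
             (Real.sin (Real.pi / 6 + j * Real.pi / 3))) 0

lemma norm_pt (x y : ℝ) : ‖pt x y‖ = Real.sqrt (x ^ 2 + y ^ 2) := by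
  rw [EuclideanSpace.norm_eq]
  congr 1
  simp [pt, Fin.sum_univ_two, sq_abs]

lemma hex_subset_ball (c₀ : Plane) (φ : ℝ) :
    hexagon c₀ φ ⊆ Metric.closedBall c₀ (1 / 2) := by
  apply convexHull_min _ (convex_closedBall _ _)
  rintro _ ⟨k, rfl⟩
  simp only [hexVertex, Metric.mem_closedBall, dist_eq_norm, add_sub_cancel_left, norm_smul]
  rw [norm_pt]
  rw [Real.cos_sq_add_sin_sq (φ + k * Real.pi / 3)]
  simp

/-- The centers of the seven hexagons. -/
noncomputable def hexCenters (c : Plane) : Fin 7 → Plane :=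
  Fin.cases c (fun j =>
    c + (Real.sqrt 3 / 2) •
      pt (Real.cos (Real.pi / 6 + j * Real.pi / 3))
         (Real.sin (Real.pi / 6 + j * Real.pi / 3)))

lemma mem_septa_iff (c : Plane) (p : Plane) :
    p ∈ septaHexagon c ↔ ∃ i : Fin 7, p ∈ hexagon (hexCenters c i) 0 := by
  constructor
  · rintro (h | h)
    · exact ⟨0, h⟩
    · obtain ⟨j, hj⟩ := Set.mem_iUnion.mp h
      exact ⟨j.succ, by simpa [hexCenters] using hj⟩
  · rintro ⟨i, hi⟩
    induction i using Fin.cases with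
    | zero => exact Or.inl hi
    | succ j =>
        exact Or.inr (Set.mem_iUnion.mpr ⟨j, by simpa [hexCenters] using hi⟩)

/-- For a septa-hexagon `C` and any finite point set `S`, there is a subset
`S' ⊆ S ∩ C` with `|S'| ≤ 7` dominating every point of `S ∩ C`. -/
theorem septaHexagon_dominating_set (c : Plane) (S : Finset Plane) :
    ∃ S' : Finset Plane, S' ⊆ S ∧ (↑S' : Set Plane) ⊆ septaHexagon c ∧ S'.card ≤ 7 ∧
      ∀ p ∈ S, p ∈ septaHexagon c → ∃ q ∈ S', dist p q ≤ 1 := by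
  classical
  set T : Fin 7 → Finset Plane :=
    fun i => S.filter (fun p => p ∈ hexagon (hexCenters c i) 0) with hT
  set pick : Fin 7 → Finset Plane :=
    fun i => if h : (T i).Nonempty then {h.choose} else ∅ with hpick
  have pick_sub : ∀ i, pick i ⊆ T i := by
    intro i q hq
    simp only [hpick] at hq
    split_ifs at hq with h
    · simp only [Finset.mem_singleton] at hq
      exact hq ▸ h.choose_spec
    · simp at hq
  refine ⟨Finset.univ.biUnion pick, ?_, ?_, ?_, ?_⟩
  · intro q hq
    obtain ⟨i, _, hi⟩ := Finset.mem_biUnion.mp hq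
    exact (Finset.mem_filter.mp (pick_sub i hi)).1
  · intro q hq
    obtain ⟨i, _, hi⟩ := Finset.mem_biUnion.mp (by exact_mod_cast hq)
    exact (mem_septa_iff c q).mpr ⟨i, (Finset.mem_filter.mp (pick_sub i hi)).2⟩
  · calc (Finset.univ.biUnion pick).card ≤ ∑ i : Fin 7, (pick i).card :=
          Finset.card_biUnion_le
      _ ≤ ∑ _i : Fin 7, 1 := by
          apply Finset.sum_le_sum
          intro i _
          simp only [hpick]
          split_ifs <;> simp
      _ = 7 := by simp
  · intro p hp hpC
    obtain ⟨i, hi⟩ := (mem_septa_iff c p).mp hpC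
    have hTi : (T i).Nonempty := ⟨p, Finset.mem_filter.mpr ⟨hp, hi⟩⟩
    refine ⟨hTi.choose, Finset.mem_biUnion.mpr ⟨i, Finset.mem_univ i, by
      simp [hpick, hTi]⟩, ?_⟩
    have hq : hTi.choose ∈ hexagon (hexCenters c i) 0 :=
      (Finset.mem_filter.mp hTi.choose_spec).2
    have h1 := hex_subset_ball _ 0 hi
    have h2 := hex_subset_ball _ 0 hq
    rw [Metric.mem_closedBall] at h1 h2
    calc dist p hTi.choose ≤ dist p (hexCenters c i) + dist (hexCenters c i) hTi.choose :=
          dist_triangle _ _ _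
      _ ≤ 1 / 2 + 1 / 2 := add_le_add h1 (by rwa [dist_comm])
      _ = 1 := by norm_num
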